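/- On L²([0,1]^d), the operators (𝐈 − 𝐏)𝐓*𝐓(𝐈 − 𝐏)𝐓*𝐓(𝐈 − 𝐏) (the covariance operator of the centered right-integrated pinned Brownian sheet) and 𝐓*(𝐈 − 𝐏)𝐓𝐓*(𝐈 − 𝐏)𝐓 (the covariance operator of the right-integrated centered Brownian sheet) have the same nonzero eigenvalues with multiplicities. -/

import Mathlib

open MeasureTheory

noncomputable section

/-- Lebesgue measure on the cube `[0,1]^d`, as a measure on `ℝ^d`. -/
def cubeMeasure (d : ℕ) : Measure (Fin d → ℝ) :=
  Measure.pi fun _ => volume.restrict (Set.Icc (0:ℝ) 1)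

/-- `A` and `B` have the same nonzero eigenvalues with multiplicities. -/
def SameNonzeroEigenvalues {H : Type*} [NormedAddCommGroup H] [NormedSpace ℂ H]
    (A B : H →L[ℂ] H) : Prop :=
  ∀ l : ℂ, l ≠ 0 → ∀ m : ℕ, 1 ≤ m →
    Module.rank ℂ (LinearMap.ker (((A - l • 1) ^ m : H →L[ℂ] H) : H →ₗ[ℂ] H)) =
    Module.rank ℂ (LinearMap.ker (((B - l • 1) ^ m : H →L[ℂ] H) : H →ₗ[ℂ] H))

/-- Generalized kernels of `XY - l` and `YX - l` have the same dimension for `l ≠ 0`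
(one inequality). -/
lemma rank_ker_le_aux {H : Type*} [NormedAddCommGroup H] [NormedSpace ℂ H]
    (X Y : H →L[ℂ] H) {l : ℂ} (hl : l ≠ 0) (m : ℕ) :
    Module.rank ℂ (LinearMap.ker (((X * Y - l • 1) ^ m : H →L[ℂ] H) : H →ₗ[ℂ] H)) ≤
    Module.rank ℂ (LinearMap.ker (((Y * X - l • 1) ^ m : H →L[ℂ] H) : H →ₗ[ℂ] H)) := by
  set c : H →L[ℂ] H := X * Y - l • 1 with hc
  set c' : H →L[ℂ] H := Y * X - l • 1 with hc'
  have hcomm : Y * c = c' * Y := by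
    rw [hc, hc']
    simp only [mul_sub, sub_mul, mul_smul_comm, smul_mul_assoc, mul_one, one_mul, mul_assoc]
  have hpow : ∀ k, Y * c ^ k = c' ^ k * Y := by
    intro k; induction k with
    | zero => simp
    | succ n ih =>
      rw [pow_succ, pow_succ, ← mul_assoc, ih, mul_assoc, hcomm, ← mul_assoc]
  have hmap : ∀ u ∈ LinearMap.ker ((c ^ m : H →L[ℂ] H) : H →ₗ[ℂ] H),
      Y u ∈ LinearMap.ker ((c' ^ m : H →L[ℂ] H) : H →ₗ[ℂ] H) := by
    intro u hu
    rw [LinearMap.mem_ker] at hu ⊢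
    rw [ContinuousLinearMap.coe_coe] at hu ⊢
    have h := congrArg (fun z : H →L[ℂ] H => z u) (hpow m)
    simp only [ContinuousLinearMap.mul_apply] at h
    rw [hu, map_zero] at h
    exact h.symm
  have hinj : Function.Injective ((Y : H →ₗ[ℂ] H).restrict hmap) := by
    intro u v huv
    have h1 : Y (u : H) = Y (v : H) := by
      have := congrArg Subtype.val huv
      simpa [LinearMap.restrict_apply] using this
    have hw : (u : H) - v ∈ LinearMap.ker ((c ^ m : H →L[ℂ] H) : H →ₗ[ℂ] H) := sub_mem u.2 v.2
    have hYw : Y ((u : H) - v) = 0 := by rw [map_sub, h1, sub_self]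
    have hcw : c ((u : H) - v) = (-l) • ((u : H) - v) := by
      simp only [hc]
      simp only [ContinuousLinearMap.sub_apply, ContinuousLinearMap.mul_apply,
        ContinuousLinearMap.smul_apply, ContinuousLinearMap.one_apply, hYw, map_zero]
      rw [zero_sub, neg_smul]
    have hpow2 : ∀ k, (c ^ k) ((u : H) - v) = ((-l) ^ k) • ((u : H) - v) := by
      intro k; induction k with
      | zero => simp
      | succ n ih =>
        rw [pow_succ, ContinuousLinearMap.mul_apply, hcw, _root_.map_smul, ih, smul_smul,
          ← pow_succ']
    have h0 : ((-l) ^ m) • ((u : H) - v) = 0 := by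
      rw [← hpow2 m]; exact LinearMap.mem_ker.mp hw
    have : (u : H) - v = 0 := by
      rcases smul_eq_zero.mp h0 with h | h
      · exact absurd h (pow_ne_zero _ (neg_ne_zero.mpr hl))
      · exact h
    exact Subtype.ext (sub_eq_zero.mp this)
  exact LinearMap.rank_le_of_injective _ hinj

/-- Generalized kernels of `XY - l` and `YX - l` have the same dimension for `l ≠ 0`. -/
lemma rank_ker_eq_aux {H : Type*} [NormedAddCommGroup H] [NormedSpace ℂ H]
    (X Y : H →L[ℂ] H) {l : ℂ} (hl : l ≠ 0) (m : ℕ) :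
    Module.rank ℂ (LinearMap.ker (((X * Y - l • 1) ^ m : H →L[ℂ] H) : H →ₗ[ℂ] H)) =
    Module.rank ℂ (LinearMap.ker (((Y * X - l • 1) ^ m : H →L[ℂ] H) : H →ₗ[ℂ] H)) :=
  le_antisymm (rank_ker_le_aux X Y hl m) (rank_ker_le_aux Y X hl m)

/-- The coordinatewise flip `x ↦ 1 - x` on `ℝ^d`. -/
def cubeFlip (d : ℕ) : (Fin d → ℝ) → (Fin d → ℝ) := fun x i => 1 - x i

lemma cubeFlip_involutive (d : ℕ) : Function.Involutive (cubeFlip d) := by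
  intro x; funext i; simp [cubeFlip]

lemma cubeFlip_measurable (d : ℕ) : Measurable (cubeFlip d) := by
  apply measurable_pi_iff.mpr
  intro i
  exact (measurable_pi_apply i).const_sub 1

/-- The flip as a measurable equivalence. -/
def cubeFlipE (d : ℕ) : (Fin d → ℝ) ≃ᵐ (Fin d → ℝ) where
  toEquiv := (cubeFlip_involutive d).toPerm _
  measurable_toFun := cubeFlip_measurable d
  measurable_invFun := cubeFlip_measurable d

instance cubeMeasure_prob (d : ℕ) : IsProbabilityMeasure (cubeMeasure d) := by
  have : IsProbabilityMeasure (volume.restrict (Set.Icc (0:ℝ) 1)) :=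
    ⟨by simp [Real.volume_Icc]⟩
  unfold cubeMeasure
  infer_instance

/-- The 1-dimensional flip preserves Lebesgue measure on `[0,1]`. -/
lemma flip1d_measurePreserving :
    MeasurePreserving (fun x : ℝ => 1 - x)
      (volume.restrict (Set.Icc (0:ℝ) 1)) (volume.restrict (Set.Icc (0:ℝ) 1)) := by
  have hinv : Function.Involutive (fun x : ℝ => 1 - x) := fun x => by ring
  have hemb : MeasurableEmbedding (fun x : ℝ => 1 - x) :=
    (MeasurableEquiv.mk (hinv.toPerm _) (measurable_id.const_sub 1)
      (measurable_id.const_sub 1)).measurableEmbedding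
  have hpre : (fun x : ℝ => 1 - x) ⁻¹' Set.Icc (0:ℝ) 1 = Set.Icc (0:ℝ) 1 := by
    ext x
    simp only [Set.mem_preimage, Set.mem_Icc]
    constructor <;> rintro ⟨a, b⟩ <;> constructor <;> linarith
  have h := (Measure.measurePreserving_sub_left volume (1:ℝ)).restrict_preimage_emb hemb
    (Set.Icc (0:ℝ) 1)
  rwa [hpre] at h

/-- The flip preserves `cubeMeasure`. -/
lemma cubeFlip_measurePreserving (d : ℕ) :
    MeasurePreserving (cubeFlip d) (cubeMeasure d) (cubeMeasure d) := by
  have : IsProbabilityMeasure (volume.restrict (Set.Icc (0:ℝ) 1)) :=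
    ⟨by simp [Real.volume_Icc]⟩
  exact measurePreserving_pi _ _ (fun _ => flip1d_measurePreserving)

set_option maxHeartbeats 1000000 in
/-- On `L²([0,1]^d)`, the operators `(𝐈-𝐏)𝐓*𝐓(𝐈-𝐏)𝐓*𝐓(𝐈-𝐏)` (covariance of the
centered right-integrated pinned Brownian sheet) and `𝐓*(𝐈-𝐏)𝐓𝐓*(𝐈-𝐏)𝐓` (covariance
of the right-integrated centered Brownian sheet) have the same nonzero eigenvalues with
multiplicities. -/
theorem statement17 (d : ℕ) (hd : 1 ≤ d)
    (T Tstar P : Lp ℂ 2 (cubeMeasure d) →L[ℂ] Lp ℂ 2 (cubeMeasure d))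
    (hT : ∀ u : Lp ℂ 2 (cubeMeasure d), ∀ᵐ x ∂(cubeMeasure d),
      T u x = ∫ y in Set.Icc 0 x, u y ∂(cubeMeasure d))
    (hTstar : ∀ u : Lp ℂ 2 (cubeMeasure d), ∀ᵐ x ∂(cubeMeasure d),
      Tstar u x = ∫ y in Set.Icc x 1, u y ∂(cubeMeasure d))
    (hP : ∀ u : Lp ℂ 2 (cubeMeasure d), ∀ᵐ x ∂(cubeMeasure d),
      P u x = ∫ y, u y ∂(cubeMeasure d)) :
    SameNonzeroEigenvalues
      ((1 - P) * Tstar * T * (1 - P) * Tstar * T * (1 - P))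
      (Tstar * (1 - P) * T * Tstar * (1 - P) * T) := by
  have hmp : MeasurePreserving (cubeFlip d) (cubeMeasure d) (cubeMeasure d) :=
    cubeFlip_measurePreserving d
  have hφmeas : Measurable (cubeFlip d) := cubeFlip_measurable d
  have hφemb : MeasurableEmbedding (cubeFlip d) := (cubeFlipE d).measurableEmbedding
  -- the flip operator on L²
  let J : Lp ℂ 2 (cubeMeasure d) →L[ℂ] Lp ℂ 2 (cubeMeasure d) :=
    (Lp.compMeasurePreservingₗᵢ ℂ (cubeFlip d) hmp).toContinuousLinearMap
  have hJ : ∀ u : Lp ℂ 2 (cubeMeasure d),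
      (J u : (Fin d → ℝ) → ℂ) =ᵐ[cubeMeasure d] (u : (Fin d → ℝ) → ℂ) ∘ (cubeFlip d) :=
    fun u => Lp.coeFn_compMeasurePreserving u hmp
  have hcomp : ∀ {g h : (Fin d → ℝ) → ℂ}, g =ᵐ[cubeMeasure d] h →
      g ∘ (cubeFlip d) =ᵐ[cubeMeasure d] h ∘ (cubeFlip d) := by
    intro g h hgh
    exact ae_eq_comp hφmeas.aemeasurable (by rwa [hmp.map_eq])
  -- P is idempotent
  have hPP : P * P = P := by
    ext1 u
    rw [ContinuousLinearMap.mul_apply]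
    apply Lp.ext
    have h3 : ∫ y, (P u) y ∂(cubeMeasure d) = ∫ y, u y ∂(cubeMeasure d) := by
      rw [integral_congr_ae (hP u)]
      simp
    filter_upwards [hP (P u), hP u] with x h1 h2
    rw [h1, h3, ← h2]
  -- J is an involution
  have hJJ : J * J = 1 := by
    ext1 u
    rw [ContinuousLinearMap.mul_apply, ContinuousLinearMap.one_apply]
    apply Lp.ext
    filter_upwards [hJ (J u), hcomp (hJ u)] with x h1 h2
    rw [h1, h2]
    simp only [Function.comp_apply]
    rw [cubeFlip_involutive d x]
  have hJJ' : ∀ z : Lp ℂ 2 (cubeMeasure d) →L[ℂ] Lp ℂ 2 (cubeMeasure d),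
      J * (J * z) = z := fun z => by
    rw [← mul_assoc, hJJ, one_mul]
  -- J conjugates P to P
  have hJPJ : J * P * J = P := by
    ext1 u
    rw [ContinuousLinearMap.mul_apply, ContinuousLinearMap.mul_apply]
    apply Lp.ext
    have hint : ∫ y, (J u) y ∂(cubeMeasure d) = ∫ y, u y ∂(cubeMeasure d) := by
      rw [integral_congr_ae (hJ u)]
      exact hmp.integral_comp hφemb _
    filter_upwards [hJ (P (J u)), hcomp (hP (J u)), hP u] with x h1 h2 h3
    rw [h1, h2, h3, hint]
    rfl
  -- J conjugates T to Tstar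
  have hJTJ : J * T * J = Tstar := by
    ext1 u
    rw [ContinuousLinearMap.mul_apply, ContinuousLinearMap.mul_apply]
    apply Lp.ext
    have e3 : ∀ z : Fin d → ℝ, ∫ y in Set.Icc 0 z, (J u) y ∂(cubeMeasure d)
        = ∫ y in Set.Icc 0 z, ((u : (Fin d → ℝ) → ℂ) ∘ (cubeFlip d)) y ∂(cubeMeasure d) := fun z =>
      integral_congr_ae (ae_restrict_of_ae (hJ u))
    have e4 : ∀ x : Fin d → ℝ,
        ∫ y in Set.Icc 0 (cubeFlip d x), ((u : (Fin d → ℝ) → ℂ) ∘ (cubeFlip d)) y ∂(cubeMeasure d)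
        = ∫ y in Set.Icc x 1, u y ∂(cubeMeasure d) := by
      intro x
      have hpre : (cubeFlip d) ⁻¹' Set.Icc x 1 = Set.Icc 0 (cubeFlip d x) := by
        ext y
        simp only [Set.mem_preimage, Set.mem_Icc, cubeFlip, Pi.le_def, Pi.one_apply,
          Pi.zero_apply]
        constructor <;> rintro ⟨a, b⟩ <;>
          exact ⟨fun i => by linarith [a i, b i], fun i => by linarith [a i, b i]⟩
      have h := hmp.setIntegral_preimage_emb hφemb (u : (Fin d → ℝ) → ℂ) (Set.Icc x 1)
      rw [hpre] at h
      exact h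
    filter_upwards [hJ (T (J u)), hcomp (hT (J u)), hTstar u] with x h1 h2 h3
    rw [h1, h2]
    simp only [Function.comp_apply]
    rw [e3 (cubeFlip d x), e4 x, ← h3]
  have hJTsJ : J * Tstar * J = T := by
    rw [← hJTJ, mul_assoc, mul_assoc, hJJ, mul_one, ← mul_assoc, hJJ, one_mul]
  have hJQJ : J * (1 - P) * J = 1 - P := by
    simp only [mul_sub, sub_mul, mul_one, hJPJ, hJJ]
  have hconj : ∀ x y : Lp ℂ 2 (cubeMeasure d) →L[ℂ] Lp ℂ 2 (cubeMeasure d),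
      J * (x * y) * J = (J * x * J) * (J * y * J) := by
    intro x y
    simp only [mul_assoc, hJJ']
  -- conjugating B by J
  have hJBJ : J * (Tstar * (1 - P) * T * Tstar * (1 - P) * T) * J
      = T * (1 - P) * Tstar * T * (1 - P) * Tstar := by
    simp only [hconj]
    rw [hJTJ, hJTsJ, hJQJ]
  have hQQ : (1 - P) * (1 - P) = (1 - P) := by
    simp only [mul_sub, sub_mul, one_mul, mul_one, hPP, sub_self, sub_zero]
  intro l hl m hm
  -- Step 1: peel the leading (1-P)
  have step1 :
      Module.rank ℂ (LinearMap.ker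
        ((((1 - P) * Tstar * T * (1 - P) * Tstar * T * (1 - P) - l • 1) ^ m : Lp ℂ 2 (cubeMeasure d) →L[ℂ] Lp ℂ 2 (cubeMeasure d)) : Lp ℂ 2 (cubeMeasure d) →ₗ[ℂ] Lp ℂ 2 (cubeMeasure d))) =
      Module.rank ℂ (LinearMap.ker
        (((Tstar * T * (1 - P) * Tstar * T * (1 - P) - l • 1) ^ m : Lp ℂ 2 (cubeMeasure d) →L[ℂ] Lp ℂ 2 (cubeMeasure d)) : Lp ℂ 2 (cubeMeasure d) →ₗ[ℂ] Lp ℂ 2 (cubeMeasure d))) := by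
    have h := rank_ker_eq_aux (1 - P) (Tstar * (T * ((1 - P) * (Tstar * (T * (1 - P)))))) hl m
    have e1 : (1 - P) * (Tstar * (T * ((1 - P) * (Tstar * (T * (1 - P))))))
        = (1 - P) * Tstar * T * (1 - P) * Tstar * T * (1 - P) := by
      simp only [mul_assoc]
    have e2 : (Tstar * (T * ((1 - P) * (Tstar * (T * (1 - P)))))) * (1 - P)
        = Tstar * T * (1 - P) * Tstar * T * (1 - P) := by
      simp only [mul_assoc, hQQ]
    rw [e1, e2] at h
    exact h
  -- Step 2: cycle Tstar to the back
  have step2 :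
      Module.rank ℂ (LinearMap.ker
        (((Tstar * T * (1 - P) * Tstar * T * (1 - P) - l • 1) ^ m : Lp ℂ 2 (cubeMeasure d) →L[ℂ] Lp ℂ 2 (cubeMeasure d)) : Lp ℂ 2 (cubeMeasure d) →ₗ[ℂ] Lp ℂ 2 (cubeMeasure d))) =
      Module.rank ℂ (LinearMap.ker
        (((T * (1 - P) * Tstar * T * (1 - P) * Tstar - l • 1) ^ m : Lp ℂ 2 (cubeMeasure d) →L[ℂ] Lp ℂ 2 (cubeMeasure d)) : Lp ℂ 2 (cubeMeasure d) →ₗ[ℂ] Lp ℂ 2 (cubeMeasure d))) := by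
    have h := rank_ker_eq_aux Tstar (T * ((1 - P) * (Tstar * (T * (1 - P))))) hl m
    have e1 : Tstar * (T * ((1 - P) * (Tstar * (T * (1 - P)))))
        = Tstar * T * (1 - P) * Tstar * T * (1 - P) := by
      simp only [mul_assoc]
    have e2 : (T * ((1 - P) * (Tstar * (T * (1 - P))))) * Tstar
        = T * (1 - P) * Tstar * T * (1 - P) * Tstar := by
      simp only [mul_assoc]
    rw [e1, e2] at h
    exact h
  -- Step 3: identify the result with J B J, then cycle J around
  have step3 :
      Module.rank ℂ (LinearMap.ker
        (((T * (1 - P) * Tstar * T * (1 - P) * Tstar - l • 1) ^ m : Lp ℂ 2 (cubeMeasure d) →L[ℂ] Lp ℂ 2 (cubeMeasure d)) : Lp ℂ 2 (cubeMeasure d) →ₗ[ℂ] Lp ℂ 2 (cubeMeasure d))) =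
      Module.rank ℂ (LinearMap.ker
        (((Tstar * (1 - P) * T * Tstar * (1 - P) * T - l • 1) ^ m : Lp ℂ 2 (cubeMeasure d) →L[ℂ] Lp ℂ 2 (cubeMeasure d)) : Lp ℂ 2 (cubeMeasure d) →ₗ[ℂ] Lp ℂ 2 (cubeMeasure d))) := by
    have h := rank_ker_eq_aux (J * (Tstar * (1 - P) * T * Tstar * (1 - P) * T)) J hl m
    have e1 : J * (Tstar * (1 - P) * T * Tstar * (1 - P) * T) * J
        = T * (1 - P) * Tstar * T * (1 - P) * Tstar := hJBJ
    have e2 : J * (J * (Tstar * (1 - P) * T * Tstar * (1 - P) * T))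
        = Tstar * (1 - P) * T * Tstar * (1 - P) * T := hJJ' _
    rw [e1, e2] at h
    exact h
  rw [step1, step2, step3]
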